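/- arXiv:2502.04605 — 2 statements merged into one kernel-verified Lean document; each statement's English description precedes it below -/
import Mathlib

section
/- Let 𝒟 ⊆ ℝ^d be an open set, let ∂A ⊆ 𝒟 be a set, and suppose there are continuously differentiable maps ρ : 𝒟 → ℝ^d and h : 𝒟 → ℝ and a continuous map n : ∂A → ℝ^d with |n(y)| = 1 for y ∈ ∂A, such that for every x ∈ 𝒟 one has ρ(x) ∈ ∂A, h(ρ(x)) = 0, and x = ρ(x) + h(x)·n(ρ(x)) (tubular neighborhood data for ∂A). Let q, q̃ : ℝ^d → ℝ be twice continuously differentiable on 𝒟 with q(y) = q̃(y) = 0, ∇q(y)·n(y) > 0 and ∇q̃(y)·n(y) > 0 for all y ∈ ∂A, and q(x) > 0 for x ∈ 𝒟 with h(x) > 0. Then the function r defined on {x ∈ 𝒟 : h(x) ≥ 0} by r(x) = q̃(x)/q(x) when h(x) > 0 and r(x) = (∇q̃(ρ(x))·n(ρ(x)))/(∇q(ρ(x))·n(ρ(x))) when h(x) = 0 is continuous on {x ∈ 𝒟 : h(x) ≥ 0}. -/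
open scoped RealInnerProductSpace

noncomputable section

theorem stmt6 {d : ℕ} (𝒟 bdryA : Set (EuclideanSpace ℝ (Fin d)))
    (h𝒟 : IsOpen 𝒟) (hsub : bdryA ⊆ 𝒟)
    (ρ : EuclideanSpace ℝ (Fin d) → EuclideanSpace ℝ (Fin d))
    (h : EuclideanSpace ℝ (Fin d) → ℝ)
    (n : EuclideanSpace ℝ (Fin d) → EuclideanSpace ℝ (Fin d))
    (hρ : ContDiffOn ℝ 1 ρ 𝒟) (hh : ContDiffOn ℝ 1 h 𝒟)
    (hn : ContinuousOn n bdryA) (hnorm : ∀ y ∈ bdryA, ‖n y‖ = 1)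
    (htub : ∀ x ∈ 𝒟, ρ x ∈ bdryA ∧ h (ρ x) = 0 ∧ x = ρ x + h x • n (ρ x))
    (q qt : EuclideanSpace ℝ (Fin d) → ℝ)
    (hq : ContDiffOn ℝ 2 q 𝒟) (hqt : ContDiffOn ℝ 2 qt 𝒟)
    (hq0 : ∀ y ∈ bdryA, q y = 0) (hqt0 : ∀ y ∈ bdryA, qt y = 0)
    (hqn : ∀ y ∈ bdryA, 0 < ⟪gradient q y, n y⟫)
    (hqtn : ∀ y ∈ bdryA, 0 < ⟪gradient qt y, n y⟫)
    (hqpos : ∀ x ∈ 𝒟, 0 < h x → 0 < q x) :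
    ContinuousOn
      (fun x => if 0 < h x then qt x / q x
        else ⟪gradient qt (ρ x), n (ρ x)⟫ / ⟪gradient q (ρ x), n (ρ x)⟫)
      {x ∈ 𝒟 | 0 ≤ h x} := by
  have gradc : ∀ f : EuclideanSpace ℝ (Fin d) → ℝ, ContDiffOn ℝ 2 f 𝒟 →
      ContinuousOn (gradient f) 𝒟 := fun f hf =>
    (InnerProductSpace.toDual ℝ _).symm.continuous.comp_continuousOn
      (hf.continuousOn_fderiv_of_isOpen h𝒟 (by norm_num))
  intro x₀ hx₀
  obtain ⟨hx₀D, hx₀h⟩ := hx₀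
  rcases hx₀h.lt_or_eq with hpos | heq0
  · -- interior case : 0 < h x₀
    have hU : IsOpen (𝒟 ∩ h ⁻¹' Set.Ioi 0) :=
      hh.continuousOn.isOpen_inter_preimage h𝒟 isOpen_Ioi
    have hxU : x₀ ∈ 𝒟 ∩ h ⁻¹' Set.Ioi 0 := ⟨hx₀D, hpos⟩
    have hca : ContinuousAt (fun x => qt x / q x) x₀ := by
      have h1 : ContinuousAt qt x₀ := hqt.continuousOn.continuousAt (h𝒟.mem_nhds hx₀D)
      have h2 : ContinuousAt q x₀ := hq.continuousOn.continuousAt (h𝒟.mem_nhds hx₀D)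
      exact h1.div h2 (ne_of_gt (hqpos _ hx₀D hpos))
    apply ContinuousAt.continuousWithinAt
    apply hca.congr_of_eventuallyEq
    filter_upwards [hU.mem_nhds hxU] with x hx
    have hx2 : 0 < h x := hx.2
    rw [if_pos hx2]
  · -- boundary case : h x₀ = 0
    have heq0 : h x₀ = 0 := heq0.symm
    have hx0b : x₀ = ρ x₀ := by
      have h1 := (htub x₀ hx₀D).2.2
      rw [heq0, zero_smul, add_zero] at h1
      exact h1
    obtain ⟨ε, εpos, hball⟩ := Metric.isOpen_iff.mp h𝒟 x₀ hx₀D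
    set V : Set (EuclideanSpace ℝ (Fin d)) :=
      {x | x ∈ 𝒟 ∧ ρ x ∈ Metric.ball x₀ (ε/2) ∧ |h x| < ε/2} with hVdef
    have hVsub : V ⊆ 𝒟 := fun x hx => hx.1
    have hVopen : IsOpen V := by
      have : V = (𝒟 ∩ ρ ⁻¹' Metric.ball x₀ (ε/2)) ∩ (𝒟 ∩ h ⁻¹' Metric.ball 0 (ε/2)) := by
        ext x
        simp only [hVdef, Set.mem_setOf_eq, Set.mem_inter_iff, Set.mem_preimage,
          Metric.mem_ball, Real.dist_eq, sub_zero]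
        tauto
      rw [this]
      exact (hρ.continuousOn.isOpen_inter_preimage h𝒟 Metric.isOpen_ball).inter
        (hh.continuousOn.isOpen_inter_preimage h𝒟 Metric.isOpen_ball)
    have hx₀V : x₀ ∈ V := by
      refine ⟨hx₀D, ?_, ?_⟩
      · rw [← hx0b]; exact Metric.mem_ball_self (by positivity)
      · rw [heq0]; simpa using half_pos εpos
    set c : ℝ → ℝ := fun t => min (max t 0) 1 with hcdef
    have hc0 : ∀ t, 0 ≤ c t := fun t => le_min (le_max_right t 0) zero_le_one
    have hc1 : ∀ t, c t ≤ 1 := fun t => min_le_right _ _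
    have hceq : ∀ t ∈ Set.uIcc (0:ℝ) 1, c t = t := by
      intro t ht
      rw [Set.uIcc_of_le zero_le_one] at ht
      simp [hcdef, max_eq_left ht.1, min_eq_left ht.2]
    have hPmem : ∀ x ∈ V, ∀ t : ℝ, ρ x + (c t * h x) • n (ρ x) ∈ 𝒟 := by
      intro x hx t
      apply hball
      have hn1 : ‖n (ρ x)‖ = 1 := hnorm _ (htub x hx.1).1
      rw [Metric.mem_ball, dist_eq_norm]
      have h1 : ‖ρ x - x₀‖ < ε/2 := by
        rw [← dist_eq_norm]; exact hx.2.1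
      have h2 : |c t * h x| ≤ |h x| := by
        rw [abs_mul]
        calc |c t| * |h x| ≤ 1 * |h x| := by
              apply mul_le_mul_of_nonneg_right _ (abs_nonneg _)
              rw [abs_of_nonneg (hc0 t)]; exact hc1 t
          _ = |h x| := one_mul _
      calc ‖ρ x + (c t * h x) • n (ρ x) - x₀‖
          ≤ ‖ρ x - x₀‖ + ‖(c t * h x) • n (ρ x)‖ := by
            rw [add_sub_right_comm]; exact norm_add_le _ _
        _ = ‖ρ x - x₀‖ + |c t * h x| := by rw [norm_smul, hn1, mul_one, Real.norm_eq_abs]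
        _ < ε/2 + ε/2 := by linarith [hx.2.2]
        _ = ε := add_halves ε
    set F : (EuclideanSpace ℝ (Fin d) → ℝ) → EuclideanSpace ℝ (Fin d) → ℝ :=
      fun f x => ∫ t in (0:ℝ)..1, ⟪gradient f (ρ x + (c t * h x) • n (ρ x)), n (ρ x)⟫
      with hFdef
    have hFcont : ∀ f, ContDiffOn ℝ 2 f 𝒟 → ContinuousOn (F f) V := by
      intro f hf
      rw [continuousOn_iff_continuous_restrict]
      have hρV : Continuous fun x : V => ρ (x : EuclideanSpace ℝ (Fin d)) :=
        hρ.continuousOn.comp_continuous continuous_subtype_val fun x => x.2.1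
      have hhV : Continuous fun x : V => h (x : EuclideanSpace ℝ (Fin d)) :=
        hh.continuousOn.comp_continuous continuous_subtype_val fun x => x.2.1
      have hnV : Continuous fun x : V => n (ρ (x : EuclideanSpace ℝ (Fin d))) :=
        hn.comp_continuous hρV fun x => (htub _ x.2.1).1
      have hcC : Continuous c := (continuous_id.max continuous_const).min continuous_const
      have hPc : Continuous fun p : V × ℝ =>
          ρ (p.1 : EuclideanSpace ℝ (Fin d)) + (c p.2 * h (p.1 : EuclideanSpace ℝ (Fin d))) •
            n (ρ (p.1 : EuclideanSpace ℝ (Fin d))) :=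
        (hρV.comp continuous_fst).add
          (((hcC.comp continuous_snd).mul (hhV.comp continuous_fst)).smul
            (hnV.comp continuous_fst))
      have hInt : Continuous (Function.uncurry fun (x : V) (t : ℝ) =>
          ⟪gradient f (ρ (x : EuclideanSpace ℝ (Fin d)) +
            (c t * h (x : EuclideanSpace ℝ (Fin d))) • n (ρ (x : EuclideanSpace ℝ (Fin d)))),
            n (ρ (x : EuclideanSpace ℝ (Fin d)))⟫) :=
        ((gradc f hf).comp_continuous hPc fun p => hPmem _ p.1.2 p.2).inner
          (hnV.comp continuous_fst)
      exact intervalIntegral.continuous_parametric_intervalIntegral_of_continuous' hInt 0 1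
    have hFval : ∀ f, ContDiffOn ℝ 2 f 𝒟 → (∀ y ∈ bdryA, f y = 0) →
        ∀ x ∈ V, f x = h x * F f x := by
      intro f hf hf0 x hx
      have hmem : ∀ t ∈ Set.uIcc (0:ℝ) 1, ρ x + (t * h x) • n (ρ x) ∈ 𝒟 := by
        intro t ht
        have h1 := hPmem x hx t
        rwa [hceq t ht] at h1
      have hψ : ∀ t ∈ Set.uIcc (0:ℝ) 1,
          HasDerivAt (fun s : ℝ => f (ρ x + (s * h x) • n (ρ x)))
            (h x * ⟪gradient f (ρ x + (t * h x) • n (ρ x)), n (ρ x)⟫) t := by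
        intro t ht
        have hγ : HasDerivAt (fun s : ℝ => ρ x + (s * h x) • n (ρ x)) (h x • n (ρ x)) t := by
          have h1 : HasDerivAt (fun s : ℝ => s * h x) (h x) t := by
            simpa using (hasDerivAt_id t).mul_const (h x)
          exact (h1.smul_const (n (ρ x))).const_add (ρ x)
        have hfd : HasFDerivAt f (fderiv ℝ f (ρ x + (t * h x) • n (ρ x)))
            (ρ x + (t * h x) • n (ρ x)) :=
          (((hf.differentiableOn (by norm_num)).differentiableAt
            (h𝒟.mem_nhds (hmem t ht)))).hasFDerivAt
        have h2 := hfd.comp_hasDerivAt t hγ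
        have h3 : ⟪gradient f (ρ x + (t * h x) • n (ρ x)), n (ρ x)⟫ =
            fderiv ℝ f (ρ x + (t * h x) • n (ρ x)) (n (ρ x)) := by
          simp [gradient, InnerProductSpace.toDual_symm_apply]
        rw [h3, ← smul_eq_mul, ← map_smul]
        exact h2
      have hcont : ContinuousOn
          (fun t : ℝ => h x * ⟪gradient f (ρ x + (t * h x) • n (ρ x)), n (ρ x)⟫)
          (Set.uIcc (0:ℝ) 1) := by
        apply continuousOn_const.mul
        apply ContinuousOn.inner _ continuousOn_const
        apply (gradc f hf).comp _ hmem
        exact Continuous.continuousOn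
          (continuous_const.add ((continuous_id.mul continuous_const).smul continuous_const))
      have hFTC := intervalIntegral.integral_eq_sub_of_hasDerivAt hψ hcont.intervalIntegrable
      have hR : f (ρ x + ((1:ℝ) * h x) • n (ρ x)) = f x := by
        rw [one_mul]
        conv_rhs => rw [(htub x hx.1).2.2]
      have hL : f (ρ x + ((0:ℝ) * h x) • n (ρ x)) = 0 := by
        rw [zero_mul, zero_smul, add_zero]
        exact hf0 _ (htub x hx.1).1
      rw [hR, hL, sub_zero] at hFTC
      rw [← hFTC, hFdef]
      rw [← intervalIntegral.integral_const_mul]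
      apply intervalIntegral.integral_congr
      intro t ht
      simp only [hceq t ht]
    have hF0 : ∀ f, ∀ x ∈ V, h x = 0 → F f x = ⟪gradient f (ρ x), n (ρ x)⟫ := by
      intro f x _ hx0
      rw [hFdef]
      simp [hx0]
    have hFq0 : 0 < F q x₀ := by
      rw [hF0 q x₀ hx₀V heq0, ← hx0b]
      exact hqn x₀ (by rw [hx0b]; exact (htub x₀ hx₀D).1)
    set W : Set (EuclideanSpace ℝ (Fin d)) := V ∩ F q ⁻¹' Set.Ioi 0 with hWdef
    have hWopen : IsOpen W := (hFcont q hq).isOpen_inter_preimage hVopen isOpen_Ioi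
    have hx₀W : x₀ ∈ W := ⟨hx₀V, hFq0⟩
    have hgc : ContinuousOn (fun x => F qt x / F q x) W :=
      ((hFcont qt hqt).mono Set.inter_subset_left).div
        ((hFcont q hq).mono Set.inter_subset_left) fun x hx => ne_of_gt hx.2
    have heqOn : ∀ y ∈ {x ∈ 𝒟 | 0 ≤ h x} ∩ W,
        (if 0 < h y then qt y / q y
          else ⟪gradient qt (ρ y), n (ρ y)⟫ / ⟪gradient q (ρ y), n (ρ y)⟫)
          = F qt y / F q y := by
      rintro y ⟨⟨hyD, hyh⟩, hyV, hyF⟩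
      by_cases hy0 : 0 < h y
      · rw [if_pos hy0, hFval qt hqt hqt0 y hyV, hFval q hq hq0 y hyV,
          mul_div_mul_left _ _ (ne_of_gt hy0)]
      · have hy0' : h y = 0 := le_antisymm (not_lt.mp hy0) hyh
        rw [if_neg hy0, hF0 qt y hyV hy0', hF0 q y hyV hy0']
    have hgA : ContinuousWithinAt (fun x => F qt x / F q x)
        ({x ∈ 𝒟 | 0 ≤ h x} ∩ W) x₀ :=
      (hgc.continuousAt (hWopen.mem_nhds hx₀W)).continuousWithinAt
    rw [← continuousWithinAt_inter (hWopen.mem_nhds hx₀W)]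
    exact hgA.congr heqOn (heqOn x₀ ⟨⟨hx₀D, hx₀h⟩, hx₀W⟩)
end
end

section
/- Let (Ω, 𝓕, Q) be a probability space with a filtration (𝓕_t)_{t ∈ [0,∞)}, let Z = (Z_t) be a nonnegative martingale with respect to (𝓕_t) and Q, with right-continuous sample paths and ∫ Z_t dQ = 1 for all t ≥ 0. Let P be a probability measure on (Ω, 𝓕) such that for every t ≥ 0, the restriction of P to 𝓕_t has density Z_t with respect to the restriction of Q to 𝓕_t. Let τ : Ω → [0,∞] be a stopping time for (𝓕_t) with P(τ < ∞) = 1 and Q(τ < ∞) = 1, and suppose that for every t ≥ 0 the optional sampling identity Z_{t ∧ τ} = E_Q[Z_t | 𝓕_{t ∧ τ}] holds Q-almost surely. Then for every set A in the stopping time σ-algebra 𝓕_τ, P(A) = ∫_A Z_τ dQ; that is, the restriction of P to 𝓕_τ has density Z_τ (the stopped value of Z at τ, defined on {τ < ∞}) with respect to the restriction of Q to 𝓕_τ. -/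
open MeasureTheory

noncomputable section

/-- The stopping-time σ-algebra `𝓕_τ = { A : A ∩ {τ ≤ t} ∈ 𝓕_t for all t ≥ 0 }` of an
(extended-value) stopping time `τ` for the filtration `𝓕`. -/
def stoppedSigma {Ω : Type*} (𝓕 : NNReal → MeasurableSpace Ω) (τ : Ω → ENNReal)
    (hτ : ∀ t : NNReal, MeasurableSet[𝓕 t] {ω | τ ω ≤ (t : ENNReal)}) :
    MeasurableSpace Ω where
  MeasurableSet' A := ∀ t : NNReal, MeasurableSet[𝓕 t] (A ∩ {ω | τ ω ≤ (t : ENNReal)})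
  measurableSet_empty := fun t => by simp
  measurableSet_compl A hA t := by
    have h1 : Aᶜ ∩ {ω | τ ω ≤ (t : ENNReal)}
        = {ω | τ ω ≤ (t : ENNReal)} \ (A ∩ {ω | τ ω ≤ (t : ENNReal)}) := by
      ext ω
      simp only [Set.mem_inter_iff, Set.mem_compl_iff, Set.mem_diff, Set.mem_setOf_eq]
      tauto
    rw [h1]
    exact (hτ t).diff (hA t)
  measurableSet_iUnion s hs t := by
    rw [Set.iUnion_inter]
    exact MeasurableSet.iUnion fun i => hs i t

theorem stmt7 {Ω : Type*} {m0 : MeasurableSpace Ω} (Q P : Measure Ω)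
    [IsProbabilityMeasure Q] [IsProbabilityMeasure P]
    (𝓕 : Filtration NNReal m0)
    (Z : NNReal → Ω → ℝ)
    (hZmart : Martingale Z 𝓕 Q)
    (hZnonneg : ∀ t ω, 0 ≤ Z t ω)
    (hZrc : ∀ ω (t : NNReal), ContinuousWithinAt (fun s => Z s ω) (Set.Ici t) t)
    (hZint : ∀ t : NNReal, ∫ ω, Z t ω ∂Q = 1)
    (hPdens : ∀ t : NNReal, ∀ A : Set Ω, MeasurableSet[𝓕 t] A →
      P A = ∫⁻ ω in A, ENNReal.ofReal (Z t ω) ∂Q)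
    (τ : Ω → ENNReal)
    (hτ : ∀ t : NNReal, MeasurableSet[𝓕 t] {ω | τ ω ≤ (t : ENNReal)})
    (hPτ : P {ω | τ ω < ⊤} = 1) (hQτ : Q {ω | τ ω < ⊤} = 1)
    (hOS : ∀ t : NNReal,
      ∀ hmin : ∀ s : NNReal,
        MeasurableSet[𝓕 s] {ω | min (t : ENNReal) (τ ω) ≤ (s : ENNReal)},
      (fun ω => Z (min (t : ENNReal) (τ ω)).toNNReal ω)
        =ᵐ[Q] Q[Z t | stoppedSigma (fun s => 𝓕 s) (fun ω => min (t : ENNReal) (τ ω)) hmin]) :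
    ∀ A : Set Ω, MeasurableSet[m0] A →
      (∀ t : NNReal, MeasurableSet[𝓕 t] (A ∩ {ω | τ ω ≤ (t : ENNReal)})) →
      P A = ∫⁻ ω in A, ENNReal.ofReal (Z (τ ω).toNNReal ω) ∂Q := by
  intro A hA hAτ
  set f : Ω → ENNReal := fun ω => ENNReal.ofReal (Z (τ ω).toNNReal ω) with hf
  -- `min t τ` is a stopping time
  have hmin : ∀ t : NNReal, ∀ s : NNReal,
      MeasurableSet[𝓕 s] {ω | min (t : ENNReal) (τ ω) ≤ (s : ENNReal)} := by
    intro t s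
    by_cases h : (t : ENNReal) ≤ (s : ENNReal)
    · have : {ω | min (t : ENNReal) (τ ω) ≤ (s : ENNReal)} = Set.univ := by
        ext ω; simp [min_le_iff, h]
      rw [this]; exact MeasurableSet.univ
    · have : {ω | min (t : ENNReal) (τ ω) ≤ (s : ENNReal)} = {ω | τ ω ≤ (s : ENNReal)} := by
        ext ω; simp [min_le_iff, h]
      rw [this]; exact hτ s
  -- key identity for each t
  have key : ∀ t : NNReal, P (A ∩ {ω | τ ω ≤ (t : ENNReal)})
      = ∫⁻ ω in A ∩ {ω | τ ω ≤ (t : ENNReal)}, f ω ∂Q := by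
    intro t
    have hm_le : stoppedSigma (fun s => 𝓕 s) (fun ω => min (t : ENNReal) (τ ω)) (hmin t)
        ≤ m0 := by
      intro S hS
      have hSeq : S = S ∩ {ω | min (t : ENNReal) (τ ω) ≤ (t : ENNReal)} := by
        ext ω; simp [min_le_iff]
      rw [hSeq]
      exact 𝓕.le t _ (hS t)
    have hB : MeasurableSet[stoppedSigma (fun s => 𝓕 s)
        (fun ω => min (t : ENNReal) (τ ω)) (hmin t)] (A ∩ {ω | τ ω ≤ (t : ENNReal)}) := by
      intro s
      by_cases h : (t : ENNReal) ≤ (s : ENNReal)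
      · have heq : A ∩ {ω | τ ω ≤ (t : ENNReal)}
            ∩ {ω | min (t : ENNReal) (τ ω) ≤ (s : ENNReal)}
            = A ∩ {ω | τ ω ≤ (t : ENNReal)} := by
          ext ω; simp only [Set.mem_inter_iff, Set.mem_setOf_eq, min_le_iff]
          tauto
        rw [heq]
        have hts : t ≤ s := by exact_mod_cast h
        exact 𝓕.mono hts _ (hAτ t)
      · have heq : A ∩ {ω | τ ω ≤ (t : ENNReal)}
            ∩ {ω | min (t : ENNReal) (τ ω) ≤ (s : ENNReal)}
            = A ∩ {ω | τ ω ≤ (s : ENNReal)} := by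
          ext ω
          simp only [Set.mem_inter_iff, Set.mem_setOf_eq, min_le_iff]
          constructor
          · rintro ⟨⟨hA', _⟩, h2⟩; exact ⟨hA', h2.resolve_left h⟩
          · rintro ⟨hA', h2⟩; exact ⟨⟨hA', h2.trans (le_of_not_ge h)⟩, Or.inr h2⟩
        rw [heq]
        exact hAτ s
    have hBm0 : MeasurableSet[m0] (A ∩ {ω | τ ω ≤ (t : ENNReal)}) := 𝓕.le t _ (hAτ t)
    haveI : SigmaFinite (Q.trim hm_le) := by
      have : IsFiniteMeasure (Q.trim hm_le) := by
        constructor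
        rw [trim_measurableSet_eq hm_le MeasurableSet.univ]
        exact measure_lt_top Q _
      infer_instance
    have hint : Integrable (Z t) Q := hZmart.integrable t
    have hOSt := hOS t (hmin t)
    calc P (A ∩ {ω | τ ω ≤ (t : ENNReal)})
        = ∫⁻ ω in A ∩ {ω | τ ω ≤ (t : ENNReal)}, ENNReal.ofReal (Z t ω) ∂Q :=
          hPdens t _ (hAτ t)
      _ = ENNReal.ofReal (∫ ω in A ∩ {ω | τ ω ≤ (t : ENNReal)}, Z t ω ∂Q) :=
          (ofReal_integral_eq_lintegral_ofReal hint.integrableOn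
            (ae_restrict_of_ae (Filter.Eventually.of_forall (hZnonneg t)))).symm
      _ = ENNReal.ofReal (∫ ω in A ∩ {ω | τ ω ≤ (t : ENNReal)},
            (Q[Z t | stoppedSigma (fun s => 𝓕 s)
              (fun ω => min (t : ENNReal) (τ ω)) (hmin t)]) ω ∂Q) := by
          rw [setIntegral_condExp hm_le hint hB]
      _ = ∫⁻ ω in A ∩ {ω | τ ω ≤ (t : ENNReal)},
            ENNReal.ofReal ((Q[Z t | stoppedSigma (fun s => 𝓕 s)
              (fun ω => min (t : ENNReal) (τ ω)) (hmin t)]) ω) ∂Q :=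
          ofReal_integral_eq_lintegral_ofReal integrable_condExp.integrableOn
            (ae_restrict_of_ae (condExp_nonneg (Filter.Eventually.of_forall (hZnonneg t))))
      _ = ∫⁻ ω in A ∩ {ω | τ ω ≤ (t : ENNReal)},
            ENNReal.ofReal (Z (min (t : ENNReal) (τ ω)).toNNReal ω) ∂Q := by
          refine lintegral_congr_ae (ae_restrict_of_ae ?_)
          filter_upwards [hOSt] with ω hω
          rw [hω]
      _ = ∫⁻ ω in A ∩ {ω | τ ω ≤ (t : ENNReal)}, f ω ∂Q := by
          refine setLIntegral_congr_fun hBm0 ?_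
          intro ω hω
          have h2 : τ ω ≤ (t : ENNReal) := hω.2
          simp only [hf, min_eq_right h2]
  -- the set where τ is finite
  have hSmeas : MeasurableSet[m0] {ω | τ ω < ⊤} := by
    have : {ω | τ ω < ⊤} = ⋃ n : ℕ, {ω | τ ω ≤ ((n : NNReal) : ENNReal)} := by
      ext ω
      simp only [Set.mem_setOf_eq, Set.mem_iUnion]
      constructor
      · intro h
        obtain ⟨n, hn⟩ := ENNReal.exists_nat_gt h.ne
        exact ⟨n, by push_cast; exact hn.le⟩
      · rintro ⟨n, hn⟩
        exact lt_of_le_of_lt hn ENNReal.coe_lt_top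
    rw [this]
    exact MeasurableSet.iUnion fun n => 𝓕.le _ _ (hτ _)
  have hPnull : P {ω | τ ω < ⊤}ᶜ = 0 := (prob_compl_eq_zero_iff hSmeas).mpr hPτ
  have hQnull : Q {ω | τ ω < ⊤}ᶜ = 0 := (prob_compl_eq_zero_iff hSmeas).mpr hQτ
  -- increasing family
  have hCmono : Monotone (fun n : ℕ => A ∩ {ω | τ ω ≤ ((n : NNReal) : ENNReal)}) := by
    intro n m hnm ω hω
    have h2 : τ ω ≤ ((n : NNReal) : ENNReal) := hω.2
    have h3 : ((n : NNReal) : ENNReal) ≤ ((m : NNReal) : ENNReal) := by exact_mod_cast hnm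
    exact ⟨hω.1, h2.trans h3⟩
  have hCunion : (⋃ n : ℕ, A ∩ {ω | τ ω ≤ ((n : NNReal) : ENNReal)})
      = A ∩ {ω | τ ω < ⊤} := by
    ext ω
    simp only [Set.mem_iUnion, Set.mem_inter_iff, Set.mem_setOf_eq]
    constructor
    · rintro ⟨n, hωA, hn⟩
      exact ⟨hωA, lt_of_le_of_lt hn ENNReal.coe_lt_top⟩
    · rintro ⟨hωA, h⟩
      obtain ⟨n, hn⟩ := ENNReal.exists_nat_gt h.ne
      exact ⟨n, hωA, by push_cast; exact hn.le⟩
  have hsub : A \ (A ∩ {ω | τ ω < ⊤}) ⊆ {ω | τ ω < ⊤}ᶜ :=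
    fun ω hω h => hω.2 ⟨hω.1, h⟩
  have hempty : (A ∩ {ω | τ ω < ⊤}) \ A = ∅ :=
    Set.diff_eq_empty.mpr Set.inter_subset_left
  have hAae : (A : Set Ω) =ᵐ[Q] (A ∩ {ω | τ ω < ⊤} : Set Ω) := by
    refine MeasureTheory.ae_eq_set.2 ⟨measure_mono_null hsub hQnull, ?_⟩
    rw [hempty]; exact measure_empty
  have hAaeP : P A = P (A ∩ {ω | τ ω < ⊤}) := by
    refine measure_congr (MeasureTheory.ae_eq_set.2 ⟨measure_mono_null hsub hPnull, ?_⟩)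
    rw [hempty]; exact measure_empty
  have hνC : ∀ n : ℕ, (Q.withDensity f) (A ∩ {ω | τ ω ≤ ((n : NNReal) : ENNReal)})
      = ∫⁻ ω in A ∩ {ω | τ ω ≤ ((n : NNReal) : ENNReal)}, f ω ∂Q := fun n =>
    withDensity_apply f (𝓕.le _ _ (hAτ _))
  calc P A = P (A ∩ {ω | τ ω < ⊤}) := hAaeP
    _ = P (⋃ n : ℕ, A ∩ {ω | τ ω ≤ ((n : NNReal) : ENNReal)}) := by rw [hCunion]
    _ = ⨆ n : ℕ, P (A ∩ {ω | τ ω ≤ ((n : NNReal) : ENNReal)}) :=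
        (hCmono.directed_le).measure_iUnion
    _ = ⨆ n : ℕ, (Q.withDensity f) (A ∩ {ω | τ ω ≤ ((n : NNReal) : ENNReal)}) := by
        refine iSup_congr fun n => ?_
        rw [hνC n]
        exact key (n : NNReal)
    _ = (Q.withDensity f) (⋃ n : ℕ, A ∩ {ω | τ ω ≤ ((n : NNReal) : ENNReal)}) :=
        ((hCmono.directed_le).measure_iUnion).symm
    _ = (Q.withDensity f) (A ∩ {ω | τ ω < ⊤}) := by rw [hCunion]
    _ = ∫⁻ ω in A ∩ {ω | τ ω < ⊤}, f ω ∂Q := withDensity_apply f (hA.inter hSmeas)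
    _ = ∫⁻ ω in A, f ω ∂Q := (setLIntegral_congr hAae).symm
end
end
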